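/- Let G be a finite (additive) abelian group and let Θ, Θ̃ : G → ℂ be signals with F(Θ)_χ ≠ 0 for every character χ : AddChar G ℂ. Then β(Θ̃)_{χ₁,χ₂} = β(Θ)_{χ₁,χ₂} for all pairs of characters χ₁, χ₂ if and only if there exists h ∈ G such that Θ̃(g) = Θ(g + h) for all g ∈ G. (Completeness of the full bispectrum on finite abelian groups: it is invariant under translation and separates signals up to translation.) -/

import Mathlib

open Finset

/-- The Fourier transform of a signal `Θ : G → ℂ` on a finite additive abelian group,
evaluated at an additive character `χ`: `F(Θ)_χ = Σ_g Θ(g) · conj(χ(g))`. -/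
noncomputable def addCharDFT {G : Type*} [AddCommGroup G] [Fintype G]
    (Θ : G → ℂ) (χ : AddChar G ℂ) : ℂ :=
  ∑ g : G, Θ g * (starRingEnd ℂ) (χ g)

/-- The bispectrum of a signal `Θ : G → ℂ` on a finite additive abelian group:
`β(Θ)_{χ₁,χ₂} = F(Θ)_{χ₁} · F(Θ)_{χ₂} · conj(F(Θ)_{χ₁·χ₂})`. -/
noncomputable def addCharBispectrum {G : Type*} [AddCommGroup G] [Fintype G]
    (Θ : G → ℂ) (χ₁ χ₂ : AddChar G ℂ) : ℂ :=
  addCharDFT Θ χ₁ * addCharDFT Θ χ₂ * (starRingEnd ℂ) (addCharDFT Θ (χ₁ * χ₂))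


lemma mul_conj_one {G : Type*} [AddCommGroup G] [Fintype G] (χ : AddChar G ℂ) (h : G) :
    χ h * (starRingEnd ℂ) (χ h) = 1 := by
  rw [← AddChar.inv_apply_eq_conj, mul_inv_cancel₀]
  intro hz
  have := χ.norm_apply h
  rw [hz] at this; simp at this

lemma dft_translate {G : Type*} [AddCommGroup G] [Fintype G] (Θ : G → ℂ) (h : G)
    (χ : AddChar G ℂ) : addCharDFT (fun g ↦ Θ (g + h)) χ = χ h * addCharDFT Θ χ := by
  unfold addCharDFT
  rw [Finset.mul_sum]
  refine Fintype.sum_bijective (Equiv.addRight h) (Equiv.bijective _) _ _ fun g ↦ ?_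
  simp only [Equiv.coe_addRight]
  rw [AddChar.map_add_eq_mul, map_mul]
  have := mul_conj_one χ h
  linear_combination (-(Θ (g + h) * (starRingEnd ℂ) (χ g))) * this

lemma dft_injective {G : Type*} [AddCommGroup G] [Fintype G] (A B : G → ℂ)
    (hAB : ∀ χ : AddChar G ℂ, addCharDFT A χ = addCharDFT B χ) : A = B := by
  classical
  have inv : ∀ (C : G → ℂ) (g : G),
      ∑ χ : AddChar G ℂ, addCharDFT C χ * χ g = (Fintype.card G : ℂ) * C g := by
    intro C g
    unfold addCharDFT
    simp_rw [Finset.sum_mul, Finset.sum_comm (γ := AddChar G ℂ), mul_assoc, ← Finset.mul_sum]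
    have key : ∀ x : G, ∑ χ : AddChar G ℂ, (starRingEnd ℂ) (χ x) * χ g
        = if g - x = 0 then (Fintype.card G : ℂ) else 0 := by
      intro x
      rw [← AddChar.sum_apply_eq_ite (g - x)]
      refine Finset.sum_congr rfl fun χ _ ↦ ?_
      rw [← AddChar.map_neg_eq_conj, ← AddChar.map_add_eq_mul, ← sub_eq_neg_add]
    simp_rw [key]
    rw [Finset.sum_eq_single g]
    · simp [mul_comm]
    · intro x _ hx
      rw [if_neg (by simpa [sub_eq_zero] using (Ne.symm hx)), mul_zero]
    · simp
  funext g
  have h1 := inv A g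
  have h2 := inv B g
  simp_rw [hAB] at h1
  have hcard : (Fintype.card G : ℂ) ≠ 0 := Nat.cast_ne_zero.2 Fintype.card_ne_zero
  exact mul_left_cancel₀ hcard (h1.symm.trans h2)

/-- Completeness of the full bispectrum on finite abelian groups: for signals whose
Fourier transform never vanishes, the bispectra agree at all pairs of characters if
and only if the signals agree up to translation. -/
theorem bispectrum_complete_abelian {G : Type*} [AddCommGroup G] [Fintype G]
    (Θ Θ' : G → ℂ) (hF : ∀ χ : AddChar G ℂ, addCharDFT Θ χ ≠ 0) :
    (∀ χ₁ χ₂ : AddChar G ℂ, addCharBispectrum Θ' χ₁ χ₂ = addCharBispectrum Θ χ₁ χ₂)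
      ↔ ∃ h : G, ∀ g : G, Θ' g = Θ (g + h) := by
  constructor
  · intro hβ
    set F := addCharDFT Θ with hFdef
    set F' := addCharDFT Θ' with hF'def
    have key : ∀ χ₁ χ₂ : AddChar G ℂ,
        F' χ₁ * F' χ₂ * (starRingEnd ℂ) (F' (χ₁ * χ₂))
          = F χ₁ * F χ₂ * (starRingEnd ℂ) (F (χ₁ * χ₂)) := hβ
    -- F' never vanishes
    have hF' : ∀ χ, F' χ ≠ 0 := by
      intro χ hz
      have h1 := key χ 1
      rw [mul_one] at h1
      have hr : F χ * F 1 * (starRingEnd ℂ) (F χ) ≠ 0 := by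
        exact mul_ne_zero (mul_ne_zero (hF χ) (hF 1)) (by simpa using hF χ)
      rw [← h1, hz] at hr
      simp at hr
    -- F' 1 = F 1
    have h11 := key 1 1
    rw [mul_one] at h11
    have hnorm1 : ‖F' 1‖ = ‖F 1‖ := by
      have := congrArg (‖·‖) h11
      simp only [norm_mul, Complex.norm_conj] at this
      have h0 : ‖F' 1‖ ≥ 0 := norm_nonneg _
      have h0' : ‖F 1‖ ≥ 0 := norm_nonneg _
      have : ‖F' 1‖ = ‖F 1‖ := by
        have h3 : ‖F' 1‖ ^ 3 = ‖F 1‖ ^ 3 := by linear_combination this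
        exact (pow_left_inj₀ h0 h0' (by norm_num)).1 h3
      exact this
    have hF1 : F' 1 = F 1 := by
      have e1 : F' 1 * F' 1 * (starRingEnd ℂ) (F' 1) = F' 1 * (Complex.normSq (F' 1) : ℂ) := by
        rw [mul_assoc, Complex.mul_conj]
      have e2 : F 1 * F 1 * (starRingEnd ℂ) (F 1) = F 1 * (Complex.normSq (F 1) : ℂ) := by
        rw [mul_assoc, Complex.mul_conj]
      have hsq : (Complex.normSq (F' 1) : ℂ) = (Complex.normSq (F 1) : ℂ) := by
        norm_cast
        rw [← Complex.sq_norm, ← Complex.sq_norm]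
        rw [hnorm1]
      rw [e1, e2, hsq] at h11
      have hns : (Complex.normSq (F 1) : ℂ) ≠ 0 := by
        simpa [Complex.normSq_eq_zero] using hF 1
      exact mul_right_cancel₀ hns h11
    -- norms agree
    have hnorm : ∀ χ, Complex.normSq (F' χ) = Complex.normSq (F χ) := by
      intro χ
      have h1 := key χ 1
      rw [mul_one] at h1
      have e1 : F' χ * F' 1 * (starRingEnd ℂ) (F' χ)
          = (Complex.normSq (F' χ) : ℂ) * F' 1 := by
        rw [mul_right_comm, Complex.mul_conj]
      have e2 : F χ * F 1 * (starRingEnd ℂ) (F χ)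
          = (Complex.normSq (F χ) : ℂ) * F 1 := by
        rw [mul_right_comm, Complex.mul_conj]
      rw [e1, e2, hF1] at h1
      have := mul_right_cancel₀ (hF 1) h1
      exact_mod_cast this
    -- the ratio is a character of the dual
    set r : AddChar G ℂ → ℂ := fun χ ↦ F' χ / F χ with hrdef
    have hrne : ∀ χ, r χ ≠ 0 := fun χ ↦ div_ne_zero (hF' χ) (hF χ)
    have hrnorm : ∀ χ, ‖r χ‖ = 1 := by
      intro χ
      rw [hrdef]
      simp only [norm_div]
      rw [div_eq_one_iff_eq (by simpa using hF χ)]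
      rw [Complex.norm_def, Complex.norm_def, hnorm χ]
    have hr1 : r 1 = 1 := by rw [hrdef]; simp only; rw [hF1, div_self (hF 1)]
    have hrmul : ∀ χ₁ χ₂, r (χ₁ * χ₂) = r χ₁ * r χ₂ := by
      intro χ₁ χ₂
      have hk := key χ₁ χ₂
      have e : r χ₁ * r χ₂ * (starRingEnd ℂ) (r (χ₁ * χ₂)) = 1 := by
        rw [hrdef]
        simp only [map_div₀]
        rw [div_mul_div_comm, div_mul_div_comm, hk]
        exact div_self (mul_ne_zero (mul_ne_zero (hF χ₁) (hF χ₂)) (by simpa using hF (χ₁ * χ₂)))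
      have hc : (starRingEnd ℂ) (r (χ₁ * χ₂)) = (r (χ₁ * χ₂))⁻¹ :=
        (Complex.inv_eq_conj (hrnorm (χ₁ * χ₂))).symm
      rw [hc, mul_inv_eq_one₀ (hrne _)] at e
      exact e.symm
    -- build the double-dual character
    let ρ : AddChar (AddChar G ℂ) ℂ :=
      { toFun := r
        map_zero_eq_one' := hr1
        map_add_eq_mul' := fun χ₁ χ₂ ↦ hrmul χ₁ χ₂ }
    obtain ⟨h, hh⟩ := AddChar.doubleDualEmb_bijective.surjective ρ
    have hval : ∀ χ : AddChar G ℂ, χ h = r χ := by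
      intro χ
      have := DFunLike.congr_fun hh χ
      simp at this
      exact this
    refine ⟨h, fun g ↦ ?_⟩
    have := dft_injective Θ' (fun g ↦ Θ (g + h)) (fun χ ↦ by
      rw [dft_translate, hval χ]
      show F' χ = r χ * F χ
      rw [hrdef]
      exact (div_mul_cancel₀ (F' χ) (hF χ)).symm)
    exact congrFun this g
  · rintro ⟨h, hh⟩ χ₁ χ₂
    have hΘ' : Θ' = fun g ↦ Θ (g + h) := funext hh
    unfold addCharBispectrum
    rw [hΘ', dft_translate, dft_translate, dft_translate]
    rw [AddChar.mul_apply, map_mul, map_mul]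
    have u1 := mul_conj_one χ₁ h
    have u2 := mul_conj_one χ₂ h
    linear_combination (χ₂ h * (starRingEnd ℂ) (χ₂ h) * addCharDFT Θ χ₁ * addCharDFT Θ χ₂ *
      (starRingEnd ℂ) (addCharDFT Θ (χ₁ * χ₂))) * u1 +
      (addCharDFT Θ χ₁ * addCharDFT Θ χ₂ * (starRingEnd ℂ) (addCharDFT Θ (χ₁ * χ₂))) * u2
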